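/- Let e, s : (0,∞) × (0,∞) → ℝ be twice continuously differentiable and P : (0,∞) × (0,∞) → ℝ be continuously differentiable, satisfying the Gibbs relation ∂_θ e = θ ∂_θ s and ∂_ρ e = θ ∂_ρ s + P/ρ² and the thermodynamic stability conditions ∂_ρ P(ρ,θ) > 0 and ∂_θ e(ρ,θ) > 0 for all ρ, θ > 0. Then for every compact set K = [ρ₀′,ρ₁′] × [θ₀′,θ₁′] ⊂ (0,∞)² there exists c > 0 such that for all (ρ,θ) ∈ K and (ρ′,θ′) ∈ K: |P(ρ,θ) − P(ρ′,θ′) − ∂_ρ P(ρ′,θ′)·(ρ − ρ′) − ∂_θ P(ρ′,θ′)·(θ − θ′)| ≤ c·Γ(ρ,θ|ρ′,θ′). -/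

import Mathlib

lemma monoKey {F G : ℝ → ℝ} {a b x₀ x : ℝ}
    (hx₀ : x₀ ∈ Set.Icc a b) (hx : x ∈ Set.Icc a b)
    (hF : ∀ y ∈ Set.Icc a b, HasDerivAt F (G y) y)
    (hGp : ∀ y ∈ Set.Icc a b, x₀ ≤ y → 0 ≤ G y)
    (hGn : ∀ y ∈ Set.Icc a b, y ≤ x₀ → G y ≤ 0) :
    F x₀ ≤ F x := by
  rcases le_total x₀ x with hle | hle
  · have hmono : MonotoneOn F (Set.Icc x₀ b) := by
      apply monotoneOn_of_deriv_nonneg (convex_Icc _ _)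
      · intro y hy
        exact (hF y ⟨le_trans hx₀.1 hy.1, hy.2⟩).continuousAt.continuousWithinAt
      · intro y hy
        rw [interior_Icc] at hy
        exact (hF y ⟨le_trans hx₀.1 hy.1.le, hy.2.le⟩).differentiableAt.differentiableWithinAt
      · intro y hy
        rw [interior_Icc] at hy
        have hyI : y ∈ Set.Icc a b := ⟨le_trans hx₀.1 hy.1.le, hy.2.le⟩
        rw [(hF y hyI).deriv]
        exact hGp y hyI hy.1.le
    exact hmono ⟨le_rfl, hx₀.2⟩ ⟨hle, hx.2⟩ hle
  · have hanti : AntitoneOn F (Set.Icc a x₀) := by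
      apply antitoneOn_of_deriv_nonpos (convex_Icc _ _)
      · intro y hy
        exact (hF y ⟨hy.1, le_trans hy.2 hx₀.2⟩).continuousAt.continuousWithinAt
      · intro y hy
        rw [interior_Icc] at hy
        exact (hF y ⟨hy.1.le, le_trans hy.2.le hx₀.2⟩).differentiableAt.differentiableWithinAt
      · intro y hy
        rw [interior_Icc] at hy
        have hyI : y ∈ Set.Icc a b := ⟨hy.1.le, le_trans hy.2.le hx₀.2⟩
        rw [(hF y hyI).deriv]
        exact hGn y hyI hy.2.le
    exact hanti ⟨hx.1, hle⟩ ⟨hx₀.1, le_rfl⟩ hle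

lemma quadSq {x₀ m : ℝ} (y : ℝ) :
    HasDerivAt (fun y : ℝ => m / 2 * (y - x₀) ^ 2) (m * (y - x₀)) y := by
  have h := (((hasDerivAt_id y).sub_const x₀).pow 2).const_mul (m / 2)
  refine h.congr_deriv ?_
  push_cast
  ring_nf
  simp [id]
  ring

lemma quad1 {f φ : ℝ → ℝ} {a b x₀ x m : ℝ}
    (hx₀ : x₀ ∈ Set.Icc a b) (hx : x ∈ Set.Icc a b)
    (hf : ∀ y ∈ Set.Icc a b, HasDerivAt f (φ y * (y - x₀)) y)
    (hφ : ∀ y ∈ Set.Icc a b, m ≤ φ y) :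
    m / 2 * (x - x₀) ^ 2 ≤ f x - f x₀ := by
  have key := monoKey (F := fun y => f y - m / 2 * (y - x₀) ^ 2)
      (G := fun y => (φ y - m) * (y - x₀)) hx₀ hx
      (fun y hy => by
        have := (hf y hy).sub (quadSq (x₀ := x₀) (m := m) y)
        refine this.congr_deriv ?_
        ring)
      (fun y hy hle => mul_nonneg (by linarith [hφ y hy]) (by linarith))
      (fun y hy hle => mul_nonpos_of_nonneg_of_nonpos (by linarith [hφ y hy]) (by linarith))
  simp only [sub_self] at key
  nlinarith [key]

lemma quad2 {f f' f'' : ℝ → ℝ} {a b x₀ x m : ℝ}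
    (hx₀ : x₀ ∈ Set.Icc a b) (hx : x ∈ Set.Icc a b)
    (hf : ∀ y ∈ Set.Icc a b, HasDerivAt f (f' y) y)
    (hf' : ∀ y ∈ Set.Icc a b, HasDerivAt f' (f'' y) y)
    (hm : ∀ y ∈ Set.Icc a b, m ≤ f'' y) :
    m / 2 * (x - x₀) ^ 2 ≤ f x - f x₀ - f' x₀ * (x - x₀) := by
  have hg : MonotoneOn (fun y => f' y - f' x₀ - m * (y - x₀)) (Set.Icc a b) := by
    apply monotoneOn_of_deriv_nonneg (convex_Icc _ _)
    · intro y hy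
      exact (((hf' y hy).sub_const _).sub
        (((hasDerivAt_id y).sub_const x₀).const_mul m)).continuousAt.continuousWithinAt
    · intro y hy
      have hyI : y ∈ Set.Icc a b := interior_subset hy
      exact (((hf' y hyI).sub_const _).sub
        (((hasDerivAt_id y).sub_const x₀).const_mul m)).differentiableAt.differentiableWithinAt
    · intro y hy
      have hyI : y ∈ Set.Icc a b := interior_subset hy
      have hd : HasDerivAt (fun y => f' y - f' x₀ - m * (y - x₀)) (f'' y - m * 1) y :=
        ((hf' y hyI).sub_const _).sub (((hasDerivAt_id y).sub_const x₀).const_mul m)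
      rw [hd.deriv]
      have := hm y hyI
      linarith
  have key := monoKey (F := fun y => f y - f' x₀ * y - m / 2 * (y - x₀) ^ 2)
      (G := fun y => f' y - f' x₀ - m * (y - x₀)) hx₀ hx
      (fun y hy => by
        have := ((hf y hy).sub ((hasDerivAt_id y).const_mul (f' x₀))).sub
          (quadSq (x₀ := x₀) (m := m) y)
        refine this.congr_deriv ?_
        ring)
      (fun y hy hle => by
        have := hg hx₀ hy hle
        simpa using this)
      (fun y hy hle => by
        have := hg hy hx₀ hle
        simpa using this)
  simp only [sub_self] at key
  nlinarith [key]



/-- Ballistic free energy `H_C(ρ,θ) = ρ e(ρ,θ) − C ρ s(ρ,θ)`. -/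
noncomputable def ballisticH (e s : ℝ × ℝ → ℝ) (C ρ θ : ℝ) : ℝ :=
  ρ * e (ρ, θ) - C * (ρ * s (ρ, θ))

/-- Relative entropy
`Γ(ρ,θ|ρ′,θ′) = H_{θ′}(ρ,θ) − ∂_ρ H_{θ′}(ρ′,θ′)·(ρ − ρ′) − H_{θ′}(ρ′,θ′)`. -/
noncomputable def relEntropy (e s : ℝ × ℝ → ℝ) (ρ θ ρ' θ' : ℝ) : ℝ :=
  ballisticH e s θ' ρ θ -
    deriv (fun r : ℝ => ballisticH e s θ' r θ') ρ' * (ρ - ρ') -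
    ballisticH e s θ' ρ' θ'

set_option maxHeartbeats 1600000 in
/-- under the Gibbs relation and thermodynamic stability (`P` being
twice continuously differentiable), on every compact set
`K = [ρ₀′,ρ₁′] × [θ₀′,θ₁′] ⊂ (0,∞)²` there is `c > 0` controlling the first-order
Taylor remainder of `P` by the relative entropy:
`|P(ρ,θ) − P(ρ′,θ′) − ∂_ρ P(ρ′,θ′)(ρ − ρ′) − ∂_θ P(ρ′,θ′)(θ − θ′)| ≤ c·Γ(ρ,θ|ρ′,θ′)`
for all `(ρ,θ), (ρ′,θ′) ∈ K`. -/
theorem pressure_taylor_remainder_relEntropy_bound (e s P : ℝ × ℝ → ℝ)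
    (he : ContDiffOn ℝ 2 e (Set.Ioi (0 : ℝ) ×ˢ Set.Ioi (0 : ℝ)))
    (hs : ContDiffOn ℝ 2 s (Set.Ioi (0 : ℝ) ×ˢ Set.Ioi (0 : ℝ)))
    (hP : ContDiffOn ℝ 2 P (Set.Ioi (0 : ℝ) ×ˢ Set.Ioi (0 : ℝ)))
    (gibbs1 : ∀ ρ θ : ℝ, 0 < ρ → 0 < θ →
      fderiv ℝ e (ρ, θ) (0, 1) = θ * fderiv ℝ s (ρ, θ) (0, 1))
    (gibbs2 : ∀ ρ θ : ℝ, 0 < ρ → 0 < θ →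
      fderiv ℝ e (ρ, θ) (1, 0) = θ * fderiv ℝ s (ρ, θ) (1, 0) + P (ρ, θ) / ρ ^ 2)
    (hstabP : ∀ ρ θ : ℝ, 0 < ρ → 0 < θ → 0 < fderiv ℝ P (ρ, θ) (1, 0))
    (hstabe : ∀ ρ θ : ℝ, 0 < ρ → 0 < θ → 0 < fderiv ℝ e (ρ, θ) (0, 1))
    (ρ₀' ρ₁' θ₀' θ₁' : ℝ) (hρ₀ : 0 < ρ₀') (hρ₁ : ρ₀' ≤ ρ₁') (hθ₀ : 0 < θ₀') (hθ₁ : θ₀' ≤ θ₁') :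
    ∃ c : ℝ, 0 < c ∧
      ∀ ρ θ ρ' θ' : ℝ, ρ ∈ Set.Icc ρ₀' ρ₁' → θ ∈ Set.Icc θ₀' θ₁' →
        ρ' ∈ Set.Icc ρ₀' ρ₁' → θ' ∈ Set.Icc θ₀' θ₁' →
        |P (ρ, θ) - P (ρ', θ') - fderiv ℝ P (ρ', θ') (1, 0) * (ρ - ρ') -
            fderiv ℝ P (ρ', θ') (0, 1) * (θ - θ')| ≤
          c * relEntropy e s ρ θ ρ' θ' := by
  classical
  set U : Set (ℝ × ℝ) := Set.Ioi (0 : ℝ) ×ˢ Set.Ioi (0 : ℝ) with hUdef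
  have hU : IsOpen U := isOpen_Ioi.prod isOpen_Ioi
  have heD : ∀ x ∈ U, HasFDerivAt e (fderiv ℝ e x) x := fun x hx =>
    ((he.differentiableOn (by norm_num)).differentiableAt (hU.mem_nhds hx)).hasFDerivAt
  have hsD : ∀ x ∈ U, HasFDerivAt s (fderiv ℝ s x) x := fun x hx =>
    ((hs.differentiableOn (by norm_num)).differentiableAt (hU.mem_nhds hx)).hasFDerivAt
  have hPD : ∀ x ∈ U, HasFDerivAt P (fderiv ℝ P x) x := fun x hx =>
    ((hP.differentiableOn (by norm_num)).differentiableAt (hU.mem_nhds hx)).hasFDerivAt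
  -- horizontal partial-derivative facts
  have hEh : ∀ r t : ℝ, 0 < r → 0 < t →
      HasDerivAt (fun r' : ℝ => e (r', t)) (fderiv ℝ e (r, t) (1, 0)) r := fun r t hr ht =>
    (heD (r, t) ⟨hr, ht⟩).comp_hasDerivAt r ((hasDerivAt_id r).prodMk (hasDerivAt_const r t))
  have hSh : ∀ r t : ℝ, 0 < r → 0 < t →
      HasDerivAt (fun r' : ℝ => s (r', t)) (fderiv ℝ s (r, t) (1, 0)) r := fun r t hr ht =>
    (hsD (r, t) ⟨hr, ht⟩).comp_hasDerivAt r ((hasDerivAt_id r).prodMk (hasDerivAt_const r t))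
  have hPh : ∀ r t : ℝ, 0 < r → 0 < t →
      HasDerivAt (fun r' : ℝ => P (r', t)) (fderiv ℝ P (r, t) (1, 0)) r := fun r t hr ht =>
    (hPD (r, t) ⟨hr, ht⟩).comp_hasDerivAt r ((hasDerivAt_id r).prodMk (hasDerivAt_const r t))
  -- vertical partial-derivative facts
  have hEv : ∀ r t : ℝ, 0 < r → 0 < t →
      HasDerivAt (fun τ : ℝ => e (r, τ)) (fderiv ℝ e (r, t) (0, 1)) t := fun r t hr ht =>
    (heD (r, t) ⟨hr, ht⟩).comp_hasDerivAt t ((hasDerivAt_const t r).prodMk (hasDerivAt_id t))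
  have hSv : ∀ r t : ℝ, 0 < r → 0 < t →
      HasDerivAt (fun τ : ℝ => s (r, τ)) (fderiv ℝ s (r, t) (0, 1)) t := fun r t hr ht =>
    (hsD (r, t) ⟨hr, ht⟩).comp_hasDerivAt t ((hasDerivAt_const t r).prodMk (hasDerivAt_id t))
  -- key derivative A : radial derivative of ballisticH
  have keyA : ∀ r t : ℝ, 0 < r → 0 < t →
      HasDerivAt (fun r' : ℝ => ballisticH e s t r' t)
        (e (r, t) - t * s (r, t) + P (r, t) / r) r := by
    intro r t hr ht
    have hraw : HasDerivAt (fun r' : ℝ => r' * e (r', t) - t * (r' * s (r', t)))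
        ((1 * e (r, t) + r * fderiv ℝ e (r, t) (1, 0)) -
          t * (1 * s (r, t) + r * fderiv ℝ s (r, t) (1, 0))) r :=
      ((hasDerivAt_id r).mul (hEh r t hr ht)).sub
        (((hasDerivAt_id r).mul (hSh r t hr ht)).const_mul t)
    have heq : (1 * e (r, t) + r * fderiv ℝ e (r, t) (1, 0)) -
        t * (1 * s (r, t) + r * fderiv ℝ s (r, t) (1, 0)) =
        e (r, t) - t * s (r, t) + P (r, t) / r := by
      rw [gibbs2 r t hr ht]
      field_simp
      ring
    unfold ballisticH
    exact heq ▸ hraw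
  -- key derivative B : derivative of the radial derivative
  have keyB : ∀ r t : ℝ, 0 < r → 0 < t →
      HasDerivAt (fun r' : ℝ => e (r', t) - t * s (r', t) + P (r', t) / r')
        (fderiv ℝ P (r, t) (1, 0) / r) r := by
    intro r t hr ht
    have hraw : HasDerivAt (fun r' : ℝ => e (r', t) - t * s (r', t) + P (r', t) / r')
        ((fderiv ℝ e (r, t) (1, 0) - t * fderiv ℝ s (r, t) (1, 0)) +
          (fderiv ℝ P (r, t) (1, 0) * r - P (r, t) * 1) / r ^ 2) r :=
      ((hEh r t hr ht).sub ((hSh r t hr ht).const_mul t)).add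
        ((hPh r t hr ht).div (hasDerivAt_id r) hr.ne')
    have heq : (fderiv ℝ e (r, t) (1, 0) - t * fderiv ℝ s (r, t) (1, 0)) +
        (fderiv ℝ P (r, t) (1, 0) * r - P (r, t) * 1) / r ^ 2 =
        fderiv ℝ P (r, t) (1, 0) / r := by
      rw [gibbs2 r t hr ht]
      field_simp
      ring
    exact heq ▸ hraw
  -- key derivative C : temperature derivative of ballisticH
  have keyC : ∀ r t c : ℝ, 0 < r → 0 < t →
      HasDerivAt (fun τ : ℝ => ballisticH e s c r τ)
        (r * fderiv ℝ e (r, t) (0, 1) / t * (t - c)) t := by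
    intro r t c hr ht
    have hraw : HasDerivAt (fun τ : ℝ => r * e (r, τ) - c * (r * s (r, τ)))
        (r * fderiv ℝ e (r, t) (0, 1) - c * (r * fderiv ℝ s (r, t) (0, 1))) t :=
      ((hEv r t hr ht).const_mul r).sub (((hSv r t hr ht).const_mul r).const_mul c)
    have heq : r * fderiv ℝ e (r, t) (0, 1) - c * (r * fderiv ℝ s (r, t) (0, 1)) =
        r * fderiv ℝ e (r, t) (0, 1) / t * (t - c) := by
      rw [gibbs1 r t hr ht]
      field_simp
    unfold ballisticH
    exact heq ▸ hraw
  -- the compact set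
  set K : Set (ℝ × ℝ) := Set.Icc ρ₀' ρ₁' ×ˢ Set.Icc θ₀' θ₁' with hKdef
  have hKU : K ⊆ U := Set.prod_mono (fun x hx => lt_of_lt_of_le hρ₀ hx.1)
    (fun x hx => lt_of_lt_of_le hθ₀ hx.1)
  have hKc : IsCompact K := isCompact_Icc.prod isCompact_Icc
  have hKne : K.Nonempty := ⟨(ρ₀', θ₀'), ⟨⟨le_rfl, hρ₁⟩, ⟨le_rfl, hθ₁⟩⟩⟩
  have hKconv : Convex ℝ K := (convex_Icc _ _).prod (convex_Icc _ _)
  have hKpos : ∀ x ∈ K, 0 < x.1 ∧ 0 < x.2 := fun x hx =>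
    ⟨lt_of_lt_of_le hρ₀ hx.1.1, lt_of_lt_of_le hθ₀ hx.2.1⟩
  -- minimum m₁ of (x ↦ ∂ρP(x)/x.1) on K
  have contP1 : ContinuousOn (fun x : ℝ × ℝ => fderiv ℝ P x (1, 0) / x.1) K := by
    apply ContinuousOn.div
    · exact ((hP.continuousOn_fderiv_of_isOpen hU (by norm_num)).mono hKU).clm_apply
        continuousOn_const
    · exact continuous_fst.continuousOn
    · exact fun x hx => (hKpos x hx).1.ne'
  obtain ⟨x₁, hx₁K, hx₁min⟩ := hKc.exists_isMinOn hKne contP1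
  set m₁ : ℝ := fderiv ℝ P x₁ (1, 0) / x₁.1 with hm₁def
  have hm₁pos : 0 < m₁ := by
    have h1 := (hKpos x₁ hx₁K).1
    have h2 := (hKpos x₁ hx₁K).2
    have := hstabP x₁.1 x₁.2 h1 h2
    rw [Prod.mk.eta] at this
    exact div_pos this h1
  have hm₁le : ∀ r t : ℝ, (r, t) ∈ K → m₁ ≤ fderiv ℝ P (r, t) (1, 0) / r := fun r t hrt =>
    isMinOn_iff.mp hx₁min (r, t) hrt
  -- minimum m₂ of (x ↦ x.1·∂θe(x)/x.2) on K
  have contE1 : ContinuousOn (fun x : ℝ × ℝ => x.1 * fderiv ℝ e x (0, 1) / x.2) K := by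
    apply ContinuousOn.div
    · exact continuous_fst.continuousOn.mul
        (((he.continuousOn_fderiv_of_isOpen hU (by norm_num)).mono hKU).clm_apply
          continuousOn_const)
    · exact continuous_snd.continuousOn
    · exact fun x hx => (hKpos x hx).2.ne'
  obtain ⟨x₂, hx₂K, hx₂min⟩ := hKc.exists_isMinOn hKne contE1
  set m₂ : ℝ := x₂.1 * fderiv ℝ e x₂ (0, 1) / x₂.2 with hm₂def
  have hm₂pos : 0 < m₂ := by
    have h1 := (hKpos x₂ hx₂K).1
    have h2 := (hKpos x₂ hx₂K).2
    have := hstabe x₂.1 x₂.2 h1 h2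
    rw [Prod.mk.eta] at this
    exact div_pos (mul_pos h1 this) h2
  have hm₂le : ∀ r t : ℝ, (r, t) ∈ K → m₂ ≤ r * fderiv ℝ e (r, t) (0, 1) / t := fun r t hrt =>
    isMinOn_iff.mp hx₂min (r, t) hrt
  -- bound M on the second derivative of P over K
  set F : ℝ × ℝ → (ℝ × ℝ →L[ℝ] ℝ) := fun x => fderiv ℝ P x with hFdef
  have hF1 : ContDiffOn ℝ 1 F U := hP.fderiv_of_isOpen hU (by norm_num)
  obtain ⟨M, hM⟩ := hKc.exists_bound_of_continuousOn
    ((hF1.continuousOn_fderiv_of_isOpen hU le_rfl).mono hKU)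
  have hM0 : 0 ≤ M := le_trans (norm_nonneg _) (hM _ hKne.choose_spec)
  have hFd : ∀ x ∈ K, DifferentiableAt ℝ F x := fun x hx =>
    (hF1.differentiableOn one_ne_zero).differentiableAt (hU.mem_nhds (hKU hx))
  have hLip : ∀ x ∈ K, ∀ y ∈ K, ‖F y - F x‖ ≤ M * ‖y - x‖ := fun x hx y hy =>
    hKconv.norm_image_sub_le_of_norm_fderiv_le hFd hM hx hy
  -- Taylor remainder bound
  have htay : ∀ x ∈ K, ∀ x' ∈ K, ‖P x - P x' - F x' (x - x')‖ ≤ M * ‖x - x'‖ ^ 2 := by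
    intro x hx x' hx'
    have hsegK : segment ℝ x' x ⊆ K := hKconv.segment_subset hx' hx
    have hsegB : segment ℝ x' x ⊆ Metric.closedBall x' ‖x - x'‖ :=
      (convex_closedBall _ _).segment_subset (Metric.mem_closedBall_self (norm_nonneg _))
        (by simp [Metric.mem_closedBall, dist_eq_norm])
    have hq : ∀ y ∈ segment ℝ x' x,
        HasFDerivWithinAt (fun y => P y - F x' y) (F y - F x') (segment ℝ x' x) y :=
      fun y hy => ((hPD y (hKU (hsegK hy))).sub (F x').hasFDerivAt).hasFDerivWithinAt
    have hbd : ∀ y ∈ segment ℝ x' x, ‖F y - F x'‖ ≤ M * ‖x - x'‖ := by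
      intro y hy
      refine le_trans (hLip x' hx' y (hsegK hy)) (mul_le_mul_of_nonneg_left ?_ hM0)
      have := hsegB hy
      rwa [Metric.mem_closedBall, dist_eq_norm] at this
    have := (convex_segment x' x).norm_image_sub_le_of_norm_hasFDerivWithin_le hq hbd
      (left_mem_segment ℝ x' x) (right_mem_segment ℝ x' x)
    calc ‖P x - P x' - F x' (x - x')‖
        = ‖(P x - F x' x) - (P x' - F x' x')‖ := by rw [map_sub]; ring_nf
      _ ≤ M * ‖x - x'‖ * ‖x - x'‖ := this
      _ = M * ‖x - x'‖ ^ 2 := by ring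
  -- choose the constant
  set m : ℝ := min m₁ m₂ / 2 with hmdef
  have hmpos : 0 < m := by positivity
  refine ⟨(M + 1) / m, by positivity, ?_⟩
  intro ρ θ ρ' θ' hρmem hθmem hρ'mem hθ'mem
  have hρpos : 0 < ρ := lt_of_lt_of_le hρ₀ hρmem.1
  have hθpos : 0 < θ := lt_of_lt_of_le hθ₀ hθmem.1
  have hρ'pos : 0 < ρ' := lt_of_lt_of_le hρ₀ hρ'mem.1
  have hθ'pos : 0 < θ' := lt_of_lt_of_le hθ₀ hθ'mem.1
  -- lower bound for relEntropy
  set S : ℝ := (ρ - ρ') ^ 2 + (θ - θ') ^ 2 with hSdef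
  have hS0 : 0 ≤ S := by positivity
  -- θ-part
  have hA : m₂ / 2 * (θ - θ') ^ 2 ≤
      ballisticH e s θ' ρ θ - ballisticH e s θ' ρ θ' :=
    quad1 (a := θ₀') (b := θ₁') hθ'mem hθmem
      (fun τ hτ => keyC ρ τ θ' hρpos (lt_of_lt_of_le hθ₀ hτ.1))
      (fun τ hτ => hm₂le ρ τ ⟨hρmem, hτ⟩)
  -- ρ-part
  have hB : m₁ / 2 * (ρ - ρ') ^ 2 ≤
      ballisticH e s θ' ρ θ' - ballisticH e s θ' ρ' θ' -
        (e (ρ', θ') - θ' * s (ρ', θ') + P (ρ', θ') / ρ') * (ρ - ρ') :=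
    quad2 (a := ρ₀') (b := ρ₁')
      (f' := fun r => e (r, θ') - θ' * s (r, θ') + P (r, θ') / r)
      (f'' := fun r => fderiv ℝ P (r, θ') (1, 0) / r) hρ'mem hρmem
      (fun r hr => keyA r θ' (lt_of_lt_of_le hρ₀ hr.1) hθ'pos)
      (fun r hr => keyB r θ' (lt_of_lt_of_le hρ₀ hr.1) hθ'pos)
      (fun r hr => hm₁le r θ' ⟨hr, hθ'mem⟩)
  have hderiv : deriv (fun r : ℝ => ballisticH e s θ' r θ') ρ' =
      e (ρ', θ') - θ' * s (ρ', θ') + P (ρ', θ') / ρ' := (keyA ρ' θ' hρ'pos hθ'pos).deriv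
  have hGam : m * S ≤ relEntropy e s ρ θ ρ' θ' := by
    have h1 : m ≤ m₁ / 2 := by
      rw [hmdef]
      have := min_le_left m₁ m₂
      linarith
    have h2 : m ≤ m₂ / 2 := by
      rw [hmdef]
      have := min_le_right m₁ m₂
      linarith
    have hq1 : m * (ρ - ρ') ^ 2 ≤ m₁ / 2 * (ρ - ρ') ^ 2 :=
      mul_le_mul_of_nonneg_right h1 (sq_nonneg _)
    have hq2 : m * (θ - θ') ^ 2 ≤ m₂ / 2 * (θ - θ') ^ 2 :=
      mul_le_mul_of_nonneg_right h2 (sq_nonneg _)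
    have hSsplit : m * S = m * (ρ - ρ') ^ 2 + m * (θ - θ') ^ 2 := by rw [hSdef]; ring
    unfold relEntropy
    rw [hderiv]
    linarith [hA, hB]
  -- upper bound for the remainder
  set x : ℝ × ℝ := (ρ, θ) with hxdef
  set x' : ℝ × ℝ := (ρ', θ') with hx'def
  have hxK : x ∈ K := ⟨hρmem, hθmem⟩
  have hx'K : x' ∈ K := ⟨hρ'mem, hθ'mem⟩
  have hsub : x - x' = (ρ - ρ') • ((1 : ℝ), (0 : ℝ)) + (θ - θ') • ((0 : ℝ), (1 : ℝ)) := by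
    rw [hxdef, hx'def]
    simp [Prod.ext_iff]
  have happ : F x' (x - x') = fderiv ℝ P (ρ', θ') (1, 0) * (ρ - ρ') +
      fderiv ℝ P (ρ', θ') (0, 1) * (θ - θ') := by
    rw [hsub, map_add, map_smul, map_smul, smul_eq_mul, smul_eq_mul]
    rw [hFdef, hx'def]
    ring
  have hnorm : ‖x - x'‖ ^ 2 ≤ S := by
    have h1 : ‖x - x'‖ = max |ρ - ρ'| |θ - θ'| := by
      rw [hxdef, hx'def]
      rw [Prod.mk_sub_mk, Prod.norm_def]
      simp [Real.norm_eq_abs]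
    rw [h1, hSdef]
    rcases max_cases |ρ - ρ'| |θ - θ'| with ⟨h, _⟩ | ⟨h, _⟩ <;> rw [h] <;>
      nlinarith [sq_abs (ρ - ρ'), sq_abs (θ - θ'), sq_nonneg (ρ - ρ'), sq_nonneg (θ - θ')]
  have hR : |P (ρ, θ) - P (ρ', θ') - fderiv ℝ P (ρ', θ') (1, 0) * (ρ - ρ') -
      fderiv ℝ P (ρ', θ') (0, 1) * (θ - θ')| ≤ M * S := by
    have h2 := htay x hxK x' hx'K
    rw [happ] at h2
    have h3 : M * ‖x - x'‖ ^ 2 ≤ M * S := mul_le_mul_of_nonneg_left hnorm hM0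
    calc |P (ρ, θ) - P (ρ', θ') - fderiv ℝ P (ρ', θ') (1, 0) * (ρ - ρ') -
          fderiv ℝ P (ρ', θ') (0, 1) * (θ - θ')|
        = ‖P x - P x' - (fderiv ℝ P (ρ', θ') (1, 0) * (ρ - ρ') +
            fderiv ℝ P (ρ', θ') (0, 1) * (θ - θ'))‖ := by
          rw [hxdef, hx'def, Real.norm_eq_abs]
          ring_nf
      _ ≤ M * ‖x - x'‖ ^ 2 := h2
      _ ≤ M * S := h3
  -- conclusion
  have hc : (M + 1) / m * m = M + 1 := by field_simp
  have h4 : (M + 1) / m * (m * S) ≤ (M + 1) / m * relEntropy e s ρ θ ρ' θ' :=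
    mul_le_mul_of_nonneg_left hGam (by positivity)
  have h5 : (M + 1) / m * (m * S) = (M + 1) * S := by
    rw [← mul_assoc, hc]
  nlinarith [hR, h4, h5, hS0]
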